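/- Suppose a sequence of Fourier coefficients α : L₀# → ℂ satisfies the Maaß relation α(λ) = Σ_{d | ε(λ)} d^{k-1} α((1, μ/d, lm/d²)ᵀ) for all nonzero λ = (m, μ, l)ᵀ ∈ L₀#, where ε(λ) = gcd of the entries of S₀λ. Then α satisfies, for every prime p and every λ = (m,μ,l)ᵀ: α((pm, μ, l)ᵀ) + p^{k-1} α((m/p, μ/p, l)ᵀ) = α((m, μ, pl)ᵀ) + p^{k-1} α((m, μ/p, l/p)ᵀ), with the convention α(x) = 0 whenever x ∉ L₀#. -/

import Mathlib

open Matrix Finset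

/-- `ε(λ) = gcd(S₀λ)` for `λ = (m, μ, l)ᵀ`: the gcd of `l`, the entries of `-Sμ`,
and `m` (here `S₀λ = (l, -Sμ, m)ᵀ`). -/
def epsOf (n : ℕ) (S : Matrix (Fin n) (Fin n) ℤ) (m : ℤ) (mu : Fin n → ℤ) (l : ℤ) : ℕ :=
  Nat.gcd m.natAbs (Nat.gcd l.natAbs (Finset.univ.gcd fun i => ((S.mulVec mu) i).natAbs))

lemma sum_divisors_prime_mul {M : Type*} [AddCommMonoid M] {p : ℕ} (hp : p.Prime) (N : ℕ)
    (f : ℕ → M) :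
    ∑ d ∈ (p * N).divisors, f d
      = (∑ d ∈ N.divisors.filter (fun d => ¬ p ∣ d), f d) + ∑ d ∈ N.divisors, f (p * d) := by
  rcases eq_or_ne N 0 with rfl | hN
  · simp
  have hpN : p * N ≠ 0 := mul_ne_zero hp.ne_zero hN
  have h1 : (p*N).divisors.filter (fun d => ¬ p ∣ d) = N.divisors.filter (fun d => ¬ p ∣ d) := by
    ext d
    simp only [mem_filter, Nat.mem_divisors]
    constructor
    · rintro ⟨⟨hd, -⟩, hnd⟩
      exact ⟨⟨(((hp.coprime_iff_not_dvd).2 hnd).symm).dvd_of_dvd_mul_left hd, hN⟩, hnd⟩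
    · rintro ⟨⟨hd, -⟩, hnd⟩
      exact ⟨⟨hd.mul_left p, hpN⟩, hnd⟩
  have h2 : (p*N).divisors.filter (fun d => p ∣ d) = N.divisors.image (fun d => p * d) := by
    ext e
    simp only [mem_filter, Nat.mem_divisors, mem_image]
    constructor
    · rintro ⟨⟨he, -⟩, t, rfl⟩
      exact ⟨t, ⟨(mul_dvd_mul_iff_left hp.pos.ne').1 he, hN⟩, rfl⟩
    · rintro ⟨d, ⟨hd, -⟩, rfl⟩
      exact ⟨⟨mul_dvd_mul_left p hd, hpN⟩, dvd_mul_right p d⟩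
  have h3 := Finset.sum_filter_add_sum_filter_not (p*N).divisors (fun d => p ∣ d) f
  rw [← h3, h1, h2, add_comm, Finset.sum_image (fun a _ b _ h => Nat.eq_of_mul_eq_mul_left hp.pos h)]

lemma nat_dvd_div_iff_of_not_dvd {p a d : ℕ} (hp : p.Prime) (hpa : p ∣ a) (hd : ¬ p ∣ d) :
    d ∣ a / p ↔ d ∣ a := by
  constructor
  · intro h; exact h.trans (Nat.div_dvd_of_dvd hpa)
  · intro h
    have hc : Nat.Coprime d p := ((hp.coprime_iff_not_dvd).2 hd).symm
    rw [← Nat.mul_div_cancel' hpa] at h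
    exact hc.dvd_of_dvd_mul_left h

lemma nat_div_eq_zero_iff' {p a : ℕ} (hp : 0 < p) (hpa : p ∣ a) : a / p = 0 ↔ a = 0 := by
  obtain ⟨t, rfl⟩ := hpa
  rw [Nat.mul_div_cancel_left _ hp]
  simp [hp.ne']

lemma gcd_left_comm' (a b c : ℕ) : Nat.gcd a (Nat.gcd b c) = Nat.gcd b (Nat.gcd a c) := by
  rw [← Nat.gcd_assoc, Nat.gcd_comm a b, Nat.gcd_assoc]

/-- Core combinatorial identity. -/
lemma key_gcd_sum (p : ℕ) (hp : p.Prime) (a b c : ℕ) (f : ℕ → ℂ) :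
    (∑ d ∈ (Nat.gcd (p*a) (Nat.gcd b c)).divisors, f d)
      + (if p ∣ a ∧ p ∣ c then
          ∑ d ∈ (Nat.gcd (a/p) (Nat.gcd b (c/p))).divisors, f (p*d) else 0)
    = (∑ d ∈ (Nat.gcd a (Nat.gcd (p*b) c)).divisors, f d)
      + (if p ∣ b ∧ p ∣ c then
          ∑ d ∈ (Nat.gcd a (Nat.gcd (b/p) (c/p))).divisors, f (p*d) else 0) := by
  by_cases hc : p ∣ c
  · have hzc := nat_div_eq_zero_iff' hp.pos hc
    by_cases ha : p ∣ a <;> by_cases hb : p ∣ b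
    · -- all divisible
      have hza := nat_div_eq_zero_iff' hp.pos ha
      have hzb := nat_div_eq_zero_iff' hp.pos hb
      rw [if_pos ⟨ha, hc⟩, if_pos ⟨hb, hc⟩]
      have e1 : Nat.gcd (p*a) (Nat.gcd b c) = p * Nat.gcd a (Nat.gcd (b/p) (c/p)) := by
        conv_lhs => rw [← Nat.mul_div_cancel' hb, ← Nat.mul_div_cancel' hc]
        rw [Nat.gcd_mul_left, Nat.gcd_mul_left]
      have e3 : Nat.gcd a (Nat.gcd (p*b) c) = p * Nat.gcd (a/p) (Nat.gcd b (c/p)) := by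
        conv_lhs => rw [← Nat.mul_div_cancel' ha, ← Nat.mul_div_cancel' hc]
        rw [Nat.gcd_mul_left, Nat.gcd_mul_left]
      rw [e1, e3, sum_divisors_prime_mul hp _ f, sum_divisors_prime_mul hp _ f]
      have hfe : (Nat.gcd a (Nat.gcd (b/p) (c/p))).divisors.filter (fun d => ¬ p ∣ d)
          = (Nat.gcd (a/p) (Nat.gcd b (c/p))).divisors.filter (fun d => ¬ p ∣ d) := by
        ext d
        simp only [mem_filter, Nat.mem_divisors, Nat.dvd_gcd_iff, ne_eq,
          Nat.gcd_eq_zero_iff, hza, hzb, hzc]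
        constructor
        · rintro ⟨⟨⟨h1, h2, h3⟩, hne⟩, hnd⟩
          exact ⟨⟨⟨(nat_dvd_div_iff_of_not_dvd hp ha hnd).2 h1,
            (nat_dvd_div_iff_of_not_dvd hp hb hnd).1 h2, h3⟩, hne⟩, hnd⟩
        · rintro ⟨⟨⟨h1, h2, h3⟩, hne⟩, hnd⟩
          exact ⟨⟨⟨(nat_dvd_div_iff_of_not_dvd hp ha hnd).1 h1,
            (nat_dvd_div_iff_of_not_dvd hp hb hnd).2 h2, h3⟩, hne⟩, hnd⟩
      rw [hfe]; ring
    · -- p ∣ a, ¬ p ∣ b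
      have hza := nat_div_eq_zero_iff' hp.pos ha
      rw [if_pos ⟨ha, hc⟩, if_neg (fun h => hb h.1)]
      have e1 : Nat.gcd (p*a) (Nat.gcd b c) = Nat.gcd a (Nat.gcd b c) :=
        Nat.Coprime.gcd_mul_left_cancel a
          ((hp.coprime_iff_not_dvd).2 (fun h => hb (h.trans (Nat.gcd_dvd_left b c))))
      have e3 : Nat.gcd a (Nat.gcd (p*b) c) = p * Nat.gcd (a/p) (Nat.gcd b (c/p)) := by
        conv_lhs => rw [← Nat.mul_div_cancel' ha, ← Nat.mul_div_cancel' hc,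
          Nat.gcd_comm (p*b) (p*(c/p))]
        rw [Nat.gcd_mul_left, ← Nat.gcd_mul_left p (a/p), Nat.gcd_comm (c/p) b]
      rw [e1, e3, sum_divisors_prime_mul hp _ f, add_zero]
      have hfe : (Nat.gcd (a/p) (Nat.gcd b (c/p))).divisors.filter (fun d => ¬ p ∣ d)
          = (Nat.gcd a (Nat.gcd b c)).divisors := by
        ext d
        simp only [mem_filter, Nat.mem_divisors, Nat.dvd_gcd_iff, ne_eq,
          Nat.gcd_eq_zero_iff, hza, hzc]
        constructor
        · rintro ⟨⟨⟨h1, h2, h3⟩, hne⟩, hnd⟩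
          exact ⟨⟨(nat_dvd_div_iff_of_not_dvd hp ha hnd).1 h1, h2,
            h3.trans (Nat.div_dvd_of_dvd hc)⟩, hne⟩
        · rintro ⟨⟨h1, h2, h3⟩, hne⟩
          have hnd : ¬ p ∣ d := fun hpd => hb (hpd.trans h2)
          exact ⟨⟨⟨(nat_dvd_div_iff_of_not_dvd hp ha hnd).2 h1, h2,
            (nat_dvd_div_iff_of_not_dvd hp hc hnd).2 h3⟩, hne⟩, hnd⟩
      rw [hfe]
    · -- ¬ p ∣ a, p ∣ b
      have hzb := nat_div_eq_zero_iff' hp.pos hb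
      rw [if_neg (fun h => ha h.1), if_pos ⟨hb, hc⟩]
      have e3 : Nat.gcd a (Nat.gcd (p*b) c) = Nat.gcd a (Nat.gcd b c) := by
        rw [gcd_left_comm' a (p*b) c, gcd_left_comm' a b c]
        exact Nat.Coprime.gcd_mul_left_cancel b
          ((hp.coprime_iff_not_dvd).2 (fun h => ha (h.trans (Nat.gcd_dvd_left a c))))
      have e1 : Nat.gcd (p*a) (Nat.gcd b c) = p * Nat.gcd a (Nat.gcd (b/p) (c/p)) := by
        conv_lhs => rw [← Nat.mul_div_cancel' hb, ← Nat.mul_div_cancel' hc]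
        rw [Nat.gcd_mul_left, Nat.gcd_mul_left]
      rw [e1, e3, sum_divisors_prime_mul hp _ f, add_zero]
      have hfe : (Nat.gcd a (Nat.gcd (b/p) (c/p))).divisors.filter (fun d => ¬ p ∣ d)
          = (Nat.gcd a (Nat.gcd b c)).divisors := by
        ext d
        simp only [mem_filter, Nat.mem_divisors, Nat.dvd_gcd_iff, ne_eq,
          Nat.gcd_eq_zero_iff, hzb, hzc]
        constructor
        · rintro ⟨⟨⟨h1, h2, h3⟩, hne⟩, hnd⟩
          exact ⟨⟨h1, h2.trans (Nat.div_dvd_of_dvd hb),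
            h3.trans (Nat.div_dvd_of_dvd hc)⟩, hne⟩
        · rintro ⟨⟨h1, h2, h3⟩, hne⟩
          have hnd : ¬ p ∣ d := fun hpd => ha (hpd.trans h1)
          exact ⟨⟨⟨h1, (nat_dvd_div_iff_of_not_dvd hp hb hnd).2 h2,
            (nat_dvd_div_iff_of_not_dvd hp hc hnd).2 h3⟩, hne⟩, hnd⟩
      rw [hfe]
    · -- neither
      rw [if_neg (fun h => ha h.1), if_neg (fun h => hb h.1), add_zero, add_zero]
      have e1 : Nat.gcd (p*a) (Nat.gcd b c) = Nat.gcd a (Nat.gcd b c) :=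
        Nat.Coprime.gcd_mul_left_cancel a
          ((hp.coprime_iff_not_dvd).2 (fun h => hb (h.trans (Nat.gcd_dvd_left b c))))
      have e3 : Nat.gcd a (Nat.gcd (p*b) c) = Nat.gcd a (Nat.gcd b c) := by
        rw [gcd_left_comm' a (p*b) c, gcd_left_comm' a b c]
        exact Nat.Coprime.gcd_mul_left_cancel b
          ((hp.coprime_iff_not_dvd).2 (fun h => ha (h.trans (Nat.gcd_dvd_left a c))))
      rw [e1, e3]
  · rw [if_neg (fun h => hc h.2), if_neg (fun h => hc h.2), add_zero, add_zero]
    have e1 : Nat.gcd (p*a) (Nat.gcd b c) = Nat.gcd a (Nat.gcd b c) :=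
      Nat.Coprime.gcd_mul_left_cancel a
        ((hp.coprime_iff_not_dvd).2 (fun h => hc (h.trans (Nat.gcd_dvd_right b c))))
    have e3 : Nat.gcd a (Nat.gcd (p*b) c) = Nat.gcd a (Nat.gcd b c) := by
      rw [gcd_left_comm' a (p*b) c, gcd_left_comm' a b c]
      exact Nat.Coprime.gcd_mul_left_cancel b
        ((hp.coprime_iff_not_dvd).2 (fun h => hc (h.trans (Nat.gcd_dvd_right a c))))
    rw [e1, e3]

/-- If the Fourier coefficients `α` satisfy the Maaß relation
`α(λ) = Σ_{d ∣ ε(λ)} d^{k-1} α((1, μ/d, lm/d²)ᵀ)` for all nonzero `λ = (m,μ,l)ᵀ`,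
then they satisfy the single-step relation (iii), with the convention `α(x) = 0`
for `x ∉ L₀# = ℤ^{n+2}` (S unimodular). -/
theorem stmt_8 (n k : ℕ) (S : Matrix (Fin n) (Fin n) ℤ) (hsym : S.IsSymm)
    (heven : ∀ i, 2 ∣ S i i) (hdet : S.det = 1)
    (hpos : (S.map (Int.cast : ℤ → ℝ)).PosDef)
    (α : ℤ → (Fin n → ℤ) → ℤ → ℂ)
    (hmaass : ∀ (m : ℤ) (mu : Fin n → ℤ) (l : ℤ), ¬(m = 0 ∧ mu = 0 ∧ l = 0) →
      α m mu l = ∑ d ∈ (epsOf n S m mu l).divisors,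
        (d : ℂ) ^ (k - 1) * α 1 (fun i => mu i / (d : ℤ)) (l * m / (d : ℤ) ^ 2)) :
    ∀ p : ℕ, p.Prime → ∀ (m : ℤ) (mu : Fin n → ℤ) (l : ℤ),
      α ((p : ℤ) * m) mu l +
        (p : ℂ) ^ (k - 1) *
          (if (p : ℤ) ∣ m ∧ ∀ i, (p : ℤ) ∣ mu i then
            α (m / (p : ℤ)) (fun i => mu i / (p : ℤ)) l else 0)
      = α m mu ((p : ℤ) * l) +
        (p : ℂ) ^ (k - 1) *
          (if (∀ i, (p : ℤ) ∣ mu i) ∧ (p : ℤ) ∣ l then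
            α m (fun i => mu i / (p : ℤ)) (l / (p : ℤ)) else 0) := by
  intro p hp m mu l
  have hp0 : ((p:ℤ)) ≠ 0 := by exact_mod_cast hp.ne_zero
  have hpz : (0:ℤ) < (p:ℤ) := by exact_mod_cast hp.pos
  by_cases h0 : m = 0 ∧ mu = 0 ∧ l = 0
  · obtain ⟨rfl, rfl, rfl⟩ := h0
    simp [Int.zero_ediv, show (fun _ : Fin n => (0:ℤ)) = 0 from rfl]
  · have hmv : ∀ (A : Matrix (Fin n) (Fin n) ℤ) (v : Fin n → ℤ) (i),
        A.mulVec v i = ∑ j, A i j * v j := fun A v i => rfl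
    have hadj : (∀ i, (p:ℤ) ∣ S.mulVec mu i) → ∀ j, (p:ℤ) ∣ mu j := by
      intro hv j
      have h1 : (S.adjugate).mulVec (S.mulVec mu) = mu := by
        rw [Matrix.mulVec_mulVec, Matrix.adjugate_mul, hdet, one_smul, Matrix.one_mulVec]
      have h2 := congrFun h1 j
      rw [← h2, hmv]
      exact Finset.dvd_sum fun i _ => (hv i).mul_left _
    have hmudvd : (∀ i, (p:ℤ) ∣ mu i)
        ↔ p ∣ Finset.univ.gcd (fun i => ((S.mulVec mu) i).natAbs) := by
      constructor
      · intro h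
        refine Finset.dvd_gcd fun i _ => Int.natCast_dvd.mp ?_
        rw [hmv]
        exact Finset.dvd_sum fun j _ => (h j).mul_left _
      · intro h
        exact hadj fun i => Int.natCast_dvd.mpr (h.trans (Finset.gcd_dvd (Finset.mem_univ i)))
    have h1 : α ((p:ℤ)*m) mu l
        = ∑ d ∈ (Nat.gcd (p * m.natAbs) (Nat.gcd l.natAbs
            (Finset.univ.gcd fun i => ((S.mulVec mu) i).natAbs))).divisors,
          (d : ℂ) ^ (k - 1) * α 1 (fun i => mu i / (d : ℤ)) ((p:ℤ) * (l * m) / (d : ℤ) ^ 2) := by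
      rw [hmaass _ _ _ (fun hz => h0 ⟨(mul_eq_zero.mp hz.1).resolve_left hp0, hz.2.1, hz.2.2⟩)]
      have he : epsOf n S ((p:ℤ)*m) mu l = Nat.gcd (p * m.natAbs) (Nat.gcd l.natAbs
          (Finset.univ.gcd fun i => ((S.mulVec mu) i).natAbs)) := by
        unfold epsOf
        rw [Int.natAbs_mul, Int.natAbs_natCast]
      rw [he]
      exact Finset.sum_congr rfl fun d _ => by
        rw [show l * ((p:ℤ)*m) = (p:ℤ)*(l*m) from by ring]
    have h3 : α m mu ((p:ℤ)*l)
        = ∑ d ∈ (Nat.gcd m.natAbs (Nat.gcd (p * l.natAbs)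
            (Finset.univ.gcd fun i => ((S.mulVec mu) i).natAbs))).divisors,
          (d : ℂ) ^ (k - 1) * α 1 (fun i => mu i / (d : ℤ)) ((p:ℤ) * (l * m) / (d : ℤ) ^ 2) := by
      rw [hmaass _ _ _ (fun hz => h0 ⟨hz.1, hz.2.1,
        (mul_eq_zero.mp hz.2.2).resolve_left hp0⟩)]
      have he : epsOf n S m mu ((p:ℤ)*l) = Nat.gcd m.natAbs (Nat.gcd (p * l.natAbs)
          (Finset.univ.gcd fun i => ((S.mulVec mu) i).natAbs)) := by
        unfold epsOf
        rw [Int.natAbs_mul, Int.natAbs_natCast]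
      rw [he]
      exact Finset.sum_congr rfl fun d _ => by
        rw [show ((p:ℤ)*l) * m = (p:ℤ)*(l*m) from by ring]
    have h2 : (p : ℂ) ^ (k - 1) *
          (if (p : ℤ) ∣ m ∧ ∀ i, (p : ℤ) ∣ mu i then
            α (m / (p : ℤ)) (fun i => mu i / (p : ℤ)) l else 0)
        = (if p ∣ m.natAbs ∧ p ∣ (Finset.univ.gcd fun i => ((S.mulVec mu) i).natAbs) then
            ∑ d ∈ (Nat.gcd (m.natAbs / p) (Nat.gcd l.natAbs
              ((Finset.univ.gcd fun i => ((S.mulVec mu) i).natAbs) / p))).divisors,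
            ((p*d : ℕ) : ℂ) ^ (k - 1) * α 1 (fun i => mu i / ((p*d : ℕ) : ℤ))
              ((p:ℤ) * (l * m) / ((p*d : ℕ) : ℤ) ^ 2) else 0) := by
      by_cases hC : (p : ℤ) ∣ m ∧ ∀ i, (p : ℤ) ∣ mu i
      · rw [if_pos hC, if_pos ⟨Int.natCast_dvd.mp hC.1, hmudvd.mp hC.2⟩]
        obtain ⟨m', hm'⟩ := hC.1
        obtain ⟨ν, hν⟩ : ∃ ν : Fin n → ℤ, ∀ i, mu i = (p:ℤ) * ν i :=
          ⟨fun i => mu i / (p:ℤ), fun i => (Int.mul_ediv_cancel' (hC.2 i)).symm⟩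
        have hνeq : (fun i : Fin n => mu i / (p:ℤ)) = ν :=
          funext fun i => by rw [hν i, Int.mul_ediv_cancel_left _ hp0]
        have hm'eq : m / (p:ℤ) = m' := by rw [hm', Int.mul_ediv_cancel_left _ hp0]
        have hSν : ∀ i, S.mulVec mu i = (p:ℤ) * S.mulVec ν i := by
          intro i
          rw [hmv, hmv, Finset.mul_sum]
          exact Finset.sum_congr rfl fun j _ => by rw [hν j]; ring
        have hGν : (Finset.univ.gcd fun i => ((S.mulVec mu) i).natAbs)
            = p * Finset.univ.gcd fun i => ((S.mulVec ν) i).natAbs := by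
          have hfn : (fun i => ((S.mulVec mu) i).natAbs)
              = fun i => p * ((S.mulVec ν) i).natAbs :=
            funext fun i => by rw [hSν i, Int.natAbs_mul, Int.natAbs_natCast]
          rw [hfn, Finset.gcd_mul_left, normalize_eq]
        have hGp : (Finset.univ.gcd fun i => ((S.mulVec mu) i).natAbs) / p
            = Finset.univ.gcd fun i => ((S.mulVec ν) i).natAbs := by
          rw [hGν, Nat.mul_div_cancel_left _ hp.pos]
        have haq : m.natAbs / p = m'.natAbs := by
          rw [hm', Int.natAbs_mul, Int.natAbs_natCast, Nat.mul_div_cancel_left _ hp.pos]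
        have hne2 : ¬(m' = 0 ∧ ν = 0 ∧ l = 0) := by
          rintro ⟨hz1, hz2, hz3⟩
          exact h0 ⟨by rw [hm', hz1, mul_zero],
            funext fun i => by rw [hν i, hz2]; simp, hz3⟩
        have heps2 : epsOf n S m' ν l = Nat.gcd (m.natAbs / p) (Nat.gcd l.natAbs
            ((Finset.univ.gcd fun i => ((S.mulVec mu) i).natAbs) / p)) := by
          unfold epsOf
          rw [haq, hGp]
        rw [hm'eq, hνeq, hmaass m' ν l hne2, heps2, Finset.mul_sum]
        refine Finset.sum_congr rfl fun d _ => ?_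
        have c2 : ((p*d : ℕ) : ℤ) = (p:ℤ)*(d:ℤ) := by push_cast; ring
        have harg1 : (fun i => mu i / ((p:ℤ)*(d:ℤ))) = fun i => ν i / (d:ℤ) :=
          funext fun i => by rw [hν i]; exact Int.mul_ediv_mul_of_pos _ _ hpz
        have harg2 : (p:ℤ)*(l*m) / ((p:ℤ)*(d:ℤ))^2 = l * m' / (d:ℤ)^2 := by
          rw [show ((p:ℤ)*(d:ℤ))^2 = (p:ℤ)^2*((d:ℤ))^2 from by ring,
              show (p:ℤ)*(l*m) = (p:ℤ)^2*(l*m') from by rw [hm']; ring]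
          exact Int.mul_ediv_mul_of_pos _ _ (by positivity)
        simp only [c2, harg1, harg2]
        push_cast
        ring
      · rw [if_neg hC, mul_zero,
          if_neg (fun h => hC ⟨Int.natCast_dvd.mpr h.1, hmudvd.mpr h.2⟩)]
    have h4 : (p : ℂ) ^ (k - 1) *
          (if (∀ i, (p : ℤ) ∣ mu i) ∧ (p : ℤ) ∣ l then
            α m (fun i => mu i / (p : ℤ)) (l / (p : ℤ)) else 0)
        = (if p ∣ l.natAbs ∧ p ∣ (Finset.univ.gcd fun i => ((S.mulVec mu) i).natAbs) then
            ∑ d ∈ (Nat.gcd m.natAbs (Nat.gcd (l.natAbs / p)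
              ((Finset.univ.gcd fun i => ((S.mulVec mu) i).natAbs) / p))).divisors,
            ((p*d : ℕ) : ℂ) ^ (k - 1) * α 1 (fun i => mu i / ((p*d : ℕ) : ℤ))
              ((p:ℤ) * (l * m) / ((p*d : ℕ) : ℤ) ^ 2) else 0) := by
      by_cases hC : (∀ i, (p : ℤ) ∣ mu i) ∧ (p : ℤ) ∣ l
      · rw [if_pos hC, if_pos ⟨Int.natCast_dvd.mp hC.2, hmudvd.mp hC.1⟩]
        obtain ⟨l', hl'⟩ := hC.2
        obtain ⟨ν, hν⟩ : ∃ ν : Fin n → ℤ, ∀ i, mu i = (p:ℤ) * ν i :=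
          ⟨fun i => mu i / (p:ℤ), fun i => (Int.mul_ediv_cancel' (hC.1 i)).symm⟩
        have hνeq : (fun i : Fin n => mu i / (p:ℤ)) = ν :=
          funext fun i => by rw [hν i, Int.mul_ediv_cancel_left _ hp0]
        have hl'eq : l / (p:ℤ) = l' := by rw [hl', Int.mul_ediv_cancel_left _ hp0]
        have hSν : ∀ i, S.mulVec mu i = (p:ℤ) * S.mulVec ν i := by
          intro i
          rw [hmv, hmv, Finset.mul_sum]
          exact Finset.sum_congr rfl fun j _ => by rw [hν j]; ring
        have hGν : (Finset.univ.gcd fun i => ((S.mulVec mu) i).natAbs)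
            = p * Finset.univ.gcd fun i => ((S.mulVec ν) i).natAbs := by
          have hfn : (fun i => ((S.mulVec mu) i).natAbs)
              = fun i => p * ((S.mulVec ν) i).natAbs :=
            funext fun i => by rw [hSν i, Int.natAbs_mul, Int.natAbs_natCast]
          rw [hfn, Finset.gcd_mul_left, normalize_eq]
        have hGp : (Finset.univ.gcd fun i => ((S.mulVec mu) i).natAbs) / p
            = Finset.univ.gcd fun i => ((S.mulVec ν) i).natAbs := by
          rw [hGν, Nat.mul_div_cancel_left _ hp.pos]
        have hbq : l.natAbs / p = l'.natAbs := by
          rw [hl', Int.natAbs_mul, Int.natAbs_natCast, Nat.mul_div_cancel_left _ hp.pos]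
        have hne4 : ¬(m = 0 ∧ ν = 0 ∧ l / (p:ℤ) = 0) := by
          rintro ⟨hz1, hz2, hz3⟩
          rw [hl'eq] at hz3
          exact h0 ⟨hz1, funext fun i => by rw [hν i, hz2]; simp,
            by rw [hl', hz3, mul_zero]⟩
        have heps4 : epsOf n S m ν (l / (p:ℤ)) = Nat.gcd m.natAbs (Nat.gcd (l.natAbs / p)
            ((Finset.univ.gcd fun i => ((S.mulVec mu) i).natAbs) / p)) := by
          unfold epsOf
          rw [hl'eq, hbq, hGp]
        rw [hνeq, hmaass m ν (l / (p:ℤ)) hne4, heps4, Finset.mul_sum]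
        refine Finset.sum_congr rfl fun d _ => ?_
        have c2 : ((p*d : ℕ) : ℤ) = (p:ℤ)*(d:ℤ) := by push_cast; ring
        have harg1 : (fun i => mu i / ((p:ℤ)*(d:ℤ))) = fun i => ν i / (d:ℤ) :=
          funext fun i => by rw [hν i]; exact Int.mul_ediv_mul_of_pos _ _ hpz
        have harg2 : (p:ℤ)*(l*m) / ((p:ℤ)*(d:ℤ))^2 = l / (p:ℤ) * m / (d:ℤ)^2 := by
          rw [hl'eq,
              show ((p:ℤ)*(d:ℤ))^2 = (p:ℤ)^2*((d:ℤ))^2 from by ring,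
              show (p:ℤ)*(l*m) = (p:ℤ)^2*(l'*m) from by rw [hl']; ring]
          exact Int.mul_ediv_mul_of_pos _ _ (by positivity)
        simp only [c2, harg1, harg2]
        push_cast
        ring
      · rw [if_neg hC, mul_zero,
          if_neg (fun h => hC ⟨hmudvd.mpr h.2, Int.natCast_dvd.mpr h.1⟩)]
    rw [h1, h2, h3, h4]
    exact key_gcd_sum p hp m.natAbs l.natAbs
      (Finset.univ.gcd fun i => ((S.mulVec mu) i).natAbs)
      (fun d => (d : ℂ) ^ (k - 1) * α 1 (fun i => mu i / (d : ℤ))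
        ((p:ℤ) * (l * m) / (d : ℤ) ^ 2))
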